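/- An element F ∈ S with horizontal degree n has slope ≤ m if and only if for every 0 ≤ k ≤ n and every monomial ∏ z_{i,a}^{d_{i,a}} appearing in F, the sum of the exponents over any choice of k_i of the i-colored variables (for each i) is at most m·k + ⟨k, n−k⟩, where it suffices to check this for the variables z_{i,1},...,z_{i,k_i} by symmetry of F. -/

import Mathlib

set_option linter.unusedSectionVars false

open MvPolynomial

noncomputable section

variable (F : Type) [Field F] [CharZero F]
variable (I : Type) [Fintype I] [DecidableEq I]
variable (E : Type) [Fintype E] [DecidableEq E]

/-- The field of rational functions in the variables `z_{i,a}`, `i ∈ I`, `a ∈ ℕ`. -/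
abbrev KK := FractionRing (MvPolynomial (I × ℕ) F)

/-- The variable `z_{i,a}` as an element of `KK`. -/
def zVar (v : I × ℕ) : KK F I := algebraMap (MvPolynomial (I × ℕ) F) (KK F I) (X v)

/-- Scalars from `F` inside `KK`. -/
def cst (x : F) : KK F I := algebraMap F (KK F I) x

/-- The structure function ζ_{ij}(x) of the (doubled) quiver with edge set `E`,
source/target maps `src`,`tgt`, and parameters `q`, `tp e`. -/
def zeta (src tgt : E → I) (q : F) (tp : E → F) (i j : I) (x : KK F I) : KK F I :=
  (if i = j then (1 - x * (cst F I q)⁻¹) / (1 - x) else 1) *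
  (∏ e : E, if src e = i ∧ tgt e = j then (cst F I (tp e))⁻¹ - x else 1) *
  (∏ e : E, if src e = j ∧ tgt e = i then 1 - cst F I (tp e) * (cst F I q * x)⁻¹ else 1)

/-- The subalgebra of Laurent polynomials in the variables `z_{i,a}`, `a < n i`. -/
def LaurentIn (n : I → ℕ) : Subalgebra F (KK F I) :=
  Algebra.adjoin F {x | ∃ i a, a < n i ∧ (x = zVar F I (i, a) ∨ x = (zVar F I (i, a))⁻¹)}

/-- The field automorphism of `KK` induced by a permutation of the variables. -/
def permHom (e : (I × ℕ) ≃ (I × ℕ)) : KK F I →+* KK F I :=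
  IsFractionRing.lift
    (g := (algebraMap (MvPolynomial (I × ℕ) F) (KK F I)).comp (rename (R := F) e).toRingHom)
    (by
      have h := (IsFractionRing.injective (MvPolynomial (I × ℕ) F) (KK F I)).comp
        (MvPolynomial.rename_injective (R := F) e e.injective)
      intro x y hxy
      exact h hxy)

/-- `f` is symmetric in the variables `z_{i,1},…,z_{i,n i}` for every colour `i` separately. -/
def SymIn (n : I → ℕ) (f : KK F I) : Prop :=
  ∀ e : (I × ℕ) ≃ (I × ℕ), (∀ p : I × ℕ, (e p).1 = p.1) →
    (∀ p : I × ℕ, n p.1 ≤ p.2 → e p = p) → permHom F I e f = f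

/-- The injective endomorphism of `KK` sending `z_{i,a} ↦ z_{i, a + n i}`
(shifting the variables of the second factor in the shuffle product). -/
def shiftHom (n : I → ℕ) : KK F I →+* KK F I :=
  IsFractionRing.lift
    (g := (algebraMap (MvPolynomial (I × ℕ) F) (KK F I)).comp
      (rename (R := F) (fun p : I × ℕ => (p.1, p.2 + n p.1))).toRingHom)
    (by
      have hinj : Function.Injective (fun p : I × ℕ => (p.1, p.2 + n p.1)) := by
        rintro ⟨i, a⟩ ⟨j, b⟩ h
        simp only [Prod.mk.injEq] at h
        obtain ⟨h1, h2⟩ := h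
        subst h1
        simp only [Prod.mk.injEq, true_and]
        omega
      have h := (IsFractionRing.injective (MvPolynomial (I × ℕ) F) (KK F I)).comp
        (MvPolynomial.rename_injective (R := F) _ hinj)
      intro x y hxy
      exact h hxy)

/-- The permutation of the variables `z_{i,a}`, `a < n i`, associated to a family of
permutations `σ i ∈ S_{n i}` (fixing all other variables). -/
def permOf (n : I → ℕ) (σ : ∀ i, Equiv.Perm (Fin (n i))) : (I × ℕ) ≃ (I × ℕ) where
  toFun p := (p.1, if h : p.2 < n p.1 then ((σ p.1) ⟨p.2, h⟩ : Fin (n p.1)).1 else p.2)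
  invFun p := (p.1, if h : p.2 < n p.1 then ((σ p.1)⁻¹ ⟨p.2, h⟩ : Fin (n p.1)).1 else p.2)
  left_inv := by
    rintro ⟨i, a⟩
    dsimp only
    by_cases h : a < n i
    · rw [dif_pos h]
      have h2 : (((σ i) ⟨a, h⟩ : Fin (n i)) : ℕ) < n i := ((σ i) ⟨a, h⟩).2
      rw [dif_pos h2]
      simp
    · rw [dif_neg h, dif_neg h]
  right_inv := by
    rintro ⟨i, a⟩
    dsimp only
    by_cases h : a < n i
    · rw [dif_pos h]
      have h2 : (((σ i)⁻¹ ⟨a, h⟩ : Fin (n i)) : ℕ) < n i := ((σ i)⁻¹ ⟨a, h⟩).2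
      rw [dif_pos h2]
      simp
    · rw [dif_neg h, dif_neg h]

/-- The kernel `∏_{i,j ∈ I} ∏_{a < n i} ∏_{b < n' j} ζ_{ij}(z_{i,a} / z_{j, n j + b})`. -/
def shufKernel (src tgt : E → I) (q : F) (tp : E → F) (n n' : I → ℕ) : KK F I :=
  ∏ i : I, ∏ j : I, ∏ a ∈ Finset.range (n i), ∏ b ∈ Finset.range (n' j),
    zeta F I E src tgt q tp i j (zVar F I (i, a) / zVar F I (j, n j + b))

/-- The shuffle product of `f` (in degree `n`) and `g` (in degree `n'`). -/
def shufMul (src tgt : E → I) (q : F) (tp : E → F) (n n' : I → ℕ) (f g : KK F I) : KK F I :=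
  ((∏ i : I, ((n i).factorial * (n' i).factorial) : ℕ) : KK F I)⁻¹ *
  ∑ σ : ∀ i, Equiv.Perm (Fin (n i + n' i)),
    permHom F I (permOf I (fun i => n i + n' i) σ)
      (f * shiftHom F I n g * shufKernel F I E src tgt q tp n n')

/-- Substitution of the first wheel condition: for an edge `e : i → j`,
set `z_{i,a} := q z_{i,c}` and `z_{j,b} := t_e z_{i,c}` (so that
`z_{i,a} = q z_{j,b} / t_e = q z_{i,c}`). -/
def wheelSubst₁ (src tgt : E → I) (q : F) (tp : E → F) (e : E) (a b c : ℕ) :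
    I × ℕ → KK F I := fun p =>
  if p = (src e, a) then cst F I q * zVar F I (src e, c)
  else if p = (tgt e, b) then cst F I (tp e) * zVar F I (src e, c)
  else zVar F I p

/-- Substitution of the second wheel condition: for an edge `e : i → j`,
set `z_{j,a} := q z_{j,c}` and `z_{i,b} := q z_{j,c} / t_e` (so that
`z_{j,a} = t_e z_{i,b} = q z_{j,c}`). -/
def wheelSubst₂ (src tgt : E → I) (q : F) (tp : E → F) (e : E) (a b c : ℕ) :
    I × ℕ → KK F I := fun p =>
  if p = (tgt e, a) then cst F I q * zVar F I (tgt e, c)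
  else if p = (src e, b) then cst F I q * (cst F I (tp e))⁻¹ * zVar F I (tgt e, c)
  else zVar F I p

/-- `f` (a Laurent polynomial in the variables `z_{i,a}`, `a < n i`) satisfies the
wheel conditions: writing `f = P / z^D`, the substitutions `wheelSubst₁`/`wheelSubst₂`
annihilate the numerator `P`. -/
def Wheel (src tgt : E → I) (q : F) (tp : E → F) (n : I → ℕ) (f : KK F I) : Prop :=
  ∀ e : E, ∀ a b c : ℕ,
    ∀ P : MvPolynomial (I × ℕ) F, ∀ D : (I × ℕ) →₀ ℕ,
      f * algebraMap (MvPolynomial (I × ℕ) F) (KK F I) (monomial D 1)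
        = algebraMap (MvPolynomial (I × ℕ) F) (KK F I) P →
      (a < n (src e) → c < n (src e) → b < n (tgt e) → a ≠ c →
        (src e = tgt e → a ≠ b ∧ b ≠ c) →
        aeval (wheelSubst₁ F I E src tgt q tp e a b c) P = 0) ∧
      (a < n (tgt e) → c < n (tgt e) → b < n (src e) → a ≠ c →
        (src e = tgt e → a ≠ b ∧ b ≠ c) →
        aeval (wheelSubst₂ F I E src tgt q tp e a b c) P = 0)

/-- `f` is a homogeneous rational function of total degree `d` in the variables. -/
def IsHomogRat (d : ℤ) (f : KK F I) : Prop :=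
  ∃ (P Q : MvPolynomial (I × ℕ) F) (dP dQ : ℕ),
    P.IsHomogeneous dP ∧ Q.IsHomogeneous dQ ∧ Q ≠ 0 ∧
    f = algebraMap (MvPolynomial (I × ℕ) F) (KK F I) P /
        algebraMap (MvPolynomial (I × ℕ) F) (KK F I) Q ∧
    (dP : ℤ) - (dQ : ℤ) = d

/-- The shift map `τ_k` in horizontal degree `n`:
multiplication by `∏_{i ∈ I, a < n i} z_{i,a}^{k i}`. -/
def tauShift (k : I → ℤ) (n : I → ℕ) (f : KK F I) : KK F I :=
  f * ∏ i : I, ∏ a ∈ Finset.range (n i), (zVar F I (i, a)) ^ (k i)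

/-- Auxiliary map: scaling the variables `z_{i,a}`, `a < k i`, by the formal
parameter `ξ = X` of `RatFunc`. -/
def phi1 (k : I → ℕ) : MvPolynomial (I × ℕ) F →+* Polynomial (MvPolynomial (I × ℕ) F) :=
  (MvPolynomial.aeval (R := F) (fun p : I × ℕ =>
    Polynomial.C (X p) * (if p.2 < k p.1 then Polynomial.X else 1))).toRingHom

lemma phi1_inj (k : I → ℕ) : Function.Injective (phi1 F I k) := by
  have h : (Polynomial.evalRingHom (1 : MvPolynomial (I × ℕ) F)).comp (phi1 F I k)
      = RingHom.id _ := by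
    apply MvPolynomial.ringHom_ext
    · intro a; simp [phi1]
    · intro p; by_cases h : p.2 < k p.1 <;> simp [phi1, h]
  intro x y hxy
  have hx := congrArg (Polynomial.evalRingHom (1 : MvPolynomial (I × ℕ) F)) hxy
  rw [← RingHom.comp_apply, ← RingHom.comp_apply, h, RingHom.id_apply, RingHom.id_apply] at hx
  exact hx

/-- The field embedding `KK → RatFunc KK` sending `z_{i,a} ↦ ξ · z_{i,a}` for `a < k i`
and fixing all other variables, where `ξ` is the variable of `RatFunc`. -/
def xiScale (k : I → ℕ) : KK F I →+* RatFunc (KK F I) :=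
  IsFractionRing.lift
    (g := ((algebraMap (Polynomial (KK F I)) (RatFunc (KK F I))).comp
      ((Polynomial.mapRingHom (algebraMap (MvPolynomial (I × ℕ) F) (KK F I))).comp
        (phi1 F I k))))
    (by
      have h1 := RatFunc.algebraMap_injective (KK F I)
      have h2 := Polynomial.map_injective (algebraMap (MvPolynomial (I × ℕ) F) (KK F I))
        (IsFractionRing.injective (MvPolynomial (I × ℕ) F) (KK F I))
      have h3 := phi1_inj F I k
      intro x y hxy
      apply h3; apply h2; apply h1
      exact hxy)

/-- The limit of `g / ξ^r` as `ξ → ∞` is finite. -/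
def LimFiniteAtInfty (g : RatFunc (KK F I)) (r : ℚ) : Prop :=
  g = 0 ∨ ((g.intDegree : ℚ) ≤ r)

/-- The number of edges `i → j` of the quiver. -/
def edgeCount (src tgt : E → I) (i j : I) : ℕ :=
  (Finset.univ.filter (fun e => src e = i ∧ tgt e = j)).card

/-- The bilinear form `⟨k, l⟩ = Σ_{i,j} k_i l_j #(i → j)`. -/
def formE (src tgt : E → I) (k l : I → ℕ) : ℚ :=
  ∑ i : I, ∑ j : I, (k i : ℚ) * (l j : ℚ) * (edgeCount I E src tgt i j : ℚ)

/-- The dot product `m · k`. -/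
def dotQ (m : I → ℚ) (k : I → ℕ) : ℚ := ∑ i : I, m i * (k i : ℚ)

/-- `f` (of horizontal degree `n`) has slope `≤ m`: for all `0 ≤ k ≤ n`, the limit
`lim_{ξ→∞} f(ξ z_{i,1},…,ξ z_{i,k_i}, z_{i,k_i+1},…) / ξ^{m·k + ⟨k, n−k⟩}` is finite. -/
def SlopeLE (src tgt : E → I) (m : I → ℚ) (n : I → ℕ) (f : KK F I) : Prop :=
  ∀ k : I → ℕ, (∀ i, k i ≤ n i) →
    LimFiniteAtInfty F I (xiScale F I k f)
      (dotQ I m k + formE I E src tgt k (fun i => n i - k i))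


/-- The weighted exponent sum `s_k(μ) = Σ_i Σ_{a < k i} μ(i,a)`. -/
def skAux (k : I → ℕ) (μ : (I × ℕ) →₀ ℕ) : ℕ :=
  ∑ i : I, ∑ a ∈ Finset.range (k i), μ (i, a)

lemma skAux_eq (k : I → ℕ) (μ : (I × ℕ) →₀ ℕ) :
    skAux I k μ = ∑ p ∈ μ.support, if p.2 < k p.1 then μ p else 0 := by
  classical
  set T : Finset (I × ℕ) :=
    Finset.univ.biUnion (fun i : I => (Finset.range (k i)).image (fun a => (i, a))) with hT
  have hmemT : ∀ p : I × ℕ, p ∈ T ↔ p.2 < k p.1 := by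
    rintro ⟨i, a⟩
    simp only [hT, Finset.mem_biUnion, Finset.mem_image, Finset.mem_range, Finset.mem_univ,
      true_and]
    constructor
    · rintro ⟨j, b, hb, h⟩
      obtain ⟨h1, h2⟩ := Prod.ext_iff.mp h
      dsimp at h1 h2
      subst h1; subst h2
      exact hb
    · intro h; exact ⟨i, a, h, rfl⟩
  have h1 : skAux I k μ = ∑ p ∈ T, μ p := by
    rw [hT, Finset.sum_biUnion]
    · refine Finset.sum_congr rfl fun i _ => ?_
      rw [Finset.sum_image]
      intro a _ b _ h
      exact (Prod.ext_iff.mp h).2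
    · intro i _ j _ hij
      refine Finset.disjoint_left.mpr ?_
      rintro ⟨i', a⟩ h1 h2
      simp only [Finset.mem_image, Finset.mem_range] at h1 h2
      obtain ⟨b, _, hb⟩ := h1
      obtain ⟨c, _, hc⟩ := h2
      exact hij (((Prod.ext_iff.mp hb).1).trans ((Prod.ext_iff.mp hc).1).symm)
  have h2 : ∑ p ∈ μ.support.filter (fun p => p.2 < k p.1), μ p = ∑ p ∈ T, μ p := by
    refine Finset.sum_subset ?_ ?_
    · intro p hp
      rw [Finset.mem_filter] at hp
      exact (hmemT p).mpr hp.2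
    · intro p hpT hpf
      by_contra hne
      exact hpf (Finset.mem_filter.mpr ⟨Finsupp.mem_support_iff.mpr hne, (hmemT p).mp hpT⟩)
  rw [h1, ← h2, Finset.sum_filter]

lemma phi1_monomial (k : I → ℕ) (d : (I × ℕ) →₀ ℕ) (r : F) :
    phi1 F I k (monomial d r) = Polynomial.monomial (skAux I k d) (monomial d r) := by
  classical
  simp only [phi1, AlgHom.toRingHom_eq_coe, RingHom.coe_coe]
  rw [aeval_monomial]
  have hprod : (d.prod fun p e =>
      (Polynomial.C (X p) * if p.2 < k p.1 then Polynomial.X else 1) ^ e :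
        Polynomial (MvPolynomial (I × ℕ) F))
      = Polynomial.C (monomial d 1) * Polynomial.X ^ (skAux I k d) := by
    rw [Finsupp.prod]
    simp only [mul_pow]
    rw [Finset.prod_mul_distrib]
    congr 1
    · simp_rw [← map_pow, ← map_prod]
      congr 1
      rw [monomial_eq, C_1, one_mul, Finsupp.prod]
    · have : ∀ p ∈ d.support,
          ((if p.2 < k p.1 then (Polynomial.X : Polynomial (MvPolynomial (I × ℕ) F)) else 1) ^ d p)
          = Polynomial.X ^ (if p.2 < k p.1 then d p else 0) := by
        intro p _
        by_cases h : p.2 < k p.1 <;> simp [h]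
      rw [Finset.prod_congr rfl this, Finset.prod_pow_eq_pow_sum, ← skAux_eq]
  rw [hprod]
  rw [show (algebraMap F (Polynomial (MvPolynomial (I × ℕ) F))) r
      = Polynomial.C (C r) from rfl]
  rw [← mul_assoc, ← Polynomial.C_mul, C_mul_monomial, mul_one,
    Polynomial.C_mul_X_pow_eq_monomial]

lemma phi1_eq_sum (k : I → ℕ) (P : MvPolynomial (I × ℕ) F) :
    phi1 F I k P = ∑ μ ∈ P.support, Polynomial.monomial (skAux I k μ) (monomial μ (coeff μ P)) := by
  conv_lhs => rw [P.as_sum]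
  rw [map_sum]
  exact Finset.sum_congr rfl fun μ _ => phi1_monomial F I k μ (coeff μ P)

lemma natDegree_phi1 (k : I → ℕ) (P : MvPolynomial (I × ℕ) F) (hP : P ≠ 0) :
    (phi1 F I k P).natDegree = P.support.sup (skAux I k) := by
  classical
  rw [phi1_eq_sum]
  apply le_antisymm
  · exact Polynomial.natDegree_sum_le_of_forall_le _ _ fun μ hμ =>
      (Polynomial.natDegree_monomial_le _).trans (Finset.le_sup hμ)
  · obtain ⟨μ0, hμ0, hsup⟩ := Finset.exists_mem_eq_sup P.support
      (Finset.nonempty_iff_ne_empty.mpr (fun h => hP (MvPolynomial.support_eq_empty.mp h)))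
      (skAux I k)
    rw [hsup]
    apply Polynomial.le_natDegree_of_ne_zero
    rw [Polynomial.finset_sum_coeff]
    simp only [Polynomial.coeff_monomial]
    intro h
    have h2 := congrArg (MvPolynomial.coeff μ0) h
    rw [MvPolynomial.coeff_sum, Finset.sum_eq_single μ0] at h2
    · rw [if_pos rfl, MvPolynomial.coeff_monomial, if_pos rfl, MvPolynomial.coeff_zero] at h2
      exact (MvPolynomial.mem_support_iff.mp hμ0) h2
    · intro μ hμ hne
      by_cases hc : skAux I k μ = skAux I k μ0
      · rw [if_pos hc, MvPolynomial.coeff_monomial, if_neg hne]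
      · rw [if_neg hc, MvPolynomial.coeff_zero]
    · intro h'; exact absurd hμ0 h'

lemma intDegree_xiScale (k : I → ℕ) (f : KK F I) (hf0 : f ≠ 0)
    (P : MvPolynomial (I × ℕ) F) (D : (I × ℕ) →₀ ℕ)
    (hPD : f * algebraMap (MvPolynomial (I × ℕ) F) (KK F I) (monomial D 1)
      = algebraMap (MvPolynomial (I × ℕ) F) (KK F I) P) :
    (xiScale F I k f).intDegree
      = ((P.support.sup (skAux I k) : ℕ) : ℤ) - ((skAux I k D : ℕ) : ℤ) := by
  classical
  have hmon : (monomial D (1 : F)) ≠ 0 := by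
    simp [MvPolynomial.monomial_eq_zero]
  have hP : P ≠ 0 := by
    rintro rfl
    rw [map_zero] at hPD
    have halg : algebraMap (MvPolynomial (I × ℕ) F) (KK F I) (monomial D 1) ≠ 0 := fun h =>
      hmon (IsFractionRing.injective _ _ (h.trans (map_zero _).symm))
    exact hf0 (by
      have := mul_eq_zero.mp hPD
      tauto)
  -- xiScale on algebraMap elements
  have hxi : ∀ Q : MvPolynomial (I × ℕ) F,
      xiScale F I k (algebraMap (MvPolynomial (I × ℕ) F) (KK F I) Q)
        = algebraMap (Polynomial (KK F I)) (RatFunc (KK F I))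
            ((phi1 F I k Q).map (algebraMap (MvPolynomial (I × ℕ) F) (KK F I))) := by
    intro Q
    rw [xiScale]
    exact IsFractionRing.lift_algebraMap _ Q
  have hinjKK := IsFractionRing.injective (MvPolynomial (I × ℕ) F) (KK F I)
  have hinjR := RatFunc.algebraMap_injective (KK F I)
  have hABne : ∀ Q : MvPolynomial (I × ℕ) F, Q ≠ 0 →
      algebraMap (Polynomial (KK F I)) (RatFunc (KK F I))
        ((phi1 F I k Q).map (algebraMap (MvPolynomial (I × ℕ) F) (KK F I))) ≠ 0 := by
    intro Q hQ h
    apply hQ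
    apply phi1_inj F I k
    rw [map_zero]
    apply Polynomial.map_injective _ hinjKK
    rw [Polynomial.map_zero]
    exact hinjR (h.trans (map_zero _).symm)
  have heq := congrArg (xiScale F I k) hPD
  rw [map_mul, hxi, hxi] at heq
  have hxif : xiScale F I k f ≠ 0 := fun h =>
    hf0 ((RingHom.injective (xiScale F I k)) (h.trans (map_zero _).symm))
  have hdeg := congrArg RatFunc.intDegree heq
  rw [RatFunc.intDegree_mul hxif (hABne _ hmon), RatFunc.intDegree_polynomial,
    RatFunc.intDegree_polynomial] at hdeg
  have hndP : ((phi1 F I k P).map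
      (algebraMap (MvPolynomial (I × ℕ) F) (KK F I))).natDegree = P.support.sup (skAux I k) := by
    rw [Polynomial.natDegree_map_eq_of_injective hinjKK, natDegree_phi1 F I k P hP]
  have hndD : ((phi1 F I k (monomial D 1)).map
      (algebraMap (MvPolynomial (I × ℕ) F) (KK F I))).natDegree = skAux I k D := by
    rw [Polynomial.natDegree_map_eq_of_injective hinjKK, phi1_monomial,
      Polynomial.natDegree_monomial, if_neg hmon]
  rw [hndP, hndD] at hdeg
  omega

lemma exists_rep (n : I → ℕ) (f : KK F I) (hf : f ∈ LaurentIn F I n) :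
    ∃ (P : MvPolynomial (I × ℕ) F) (D : (I × ℕ) →₀ ℕ),
      f * algebraMap (MvPolynomial (I × ℕ) F) (KK F I) (monomial D 1)
        = algebraMap (MvPolynomial (I × ℕ) F) (KK F I) P := by
  classical
  have hf' : f ∈ Algebra.adjoin F
      {x : KK F I | ∃ i a, a < n i ∧ (x = zVar F I (i, a) ∨ x = (zVar F I (i, a))⁻¹)} := hf
  have hone : ∀ x : KK F I, x * algebraMap (MvPolynomial (I × ℕ) F) (KK F I)
      (monomial (0 : (I × ℕ) →₀ ℕ) 1) = x := by
    intro x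
    rw [monomial_zero', C_1, map_one, mul_one]
  induction hf' using Algebra.adjoin_induction with
  | mem x hx =>
    obtain ⟨i, a, -, h | h⟩ := hx
    · exact ⟨X (i, a), 0, by rw [hone, h]; rfl⟩
    · refine ⟨1, Finsupp.single (i, a) 1, ?_⟩
      have hXz : algebraMap (MvPolynomial (I × ℕ) F) (KK F I)
          (monomial (Finsupp.single (i, a) 1) 1) = zVar F I (i, a) := rfl
      have hz : zVar F I (i, a) ≠ 0 := fun h0 => MvPolynomial.X_ne_zero (i, a)
        (IsFractionRing.injective (MvPolynomial (I × ℕ) F) (KK F I)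
          (h0.trans (map_zero _).symm))
      rw [h, hXz, inv_mul_cancel₀ hz, map_one]
  | algebraMap r =>
    refine ⟨C r, 0, ?_⟩
    rw [hone, IsScalarTower.algebraMap_apply F (MvPolynomial (I × ℕ) F) (KK F I),
      MvPolynomial.algebraMap_eq]
  | add x y hx hy ihx ihy =>
    obtain ⟨P1, D1, h1⟩ := ihx hx
    obtain ⟨P2, D2, h2⟩ := ihy hy
    refine ⟨P1 * monomial D2 1 + P2 * monomial D1 1, D1 + D2, ?_⟩
    have hmm : (monomial (D1 + D2) (1 : F)) = monomial D1 1 * monomial D2 1 := by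
      rw [monomial_mul, mul_one]
    rw [hmm, map_mul, RingHom.map_add, map_mul, map_mul, ← h1, ← h2]
    ring
  | mul x y hx hy ihx ihy =>
    obtain ⟨P1, D1, h1⟩ := ihx hx
    obtain ⟨P2, D2, h2⟩ := ihy hy
    refine ⟨P1 * P2, D1 + D2, ?_⟩
    have hmm : (monomial (D1 + D2) (1 : F)) = monomial D1 1 * monomial D2 1 := by
      rw [monomial_mul, mul_one]
    rw [hmm, map_mul, map_mul, ← h1, ← h2]
    ring

lemma sum_sub_eq_sk (k : I → ℕ) (μ D : (I × ℕ) →₀ ℕ) :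
    (∑ i : I, ∑ a ∈ Finset.range (k i), ((μ (i, a) : ℤ) - (D (i, a) : ℤ)))
      = ((skAux I k μ : ℕ) : ℤ) - ((skAux I k D : ℕ) : ℤ) := by
  simp only [Finset.sum_sub_distrib, skAux]
  push_cast
  ring

/-- An element `f ∈ S` of horizontal degree `n` has slope `≤ m` if and only
if, for every `0 ≤ k ≤ n` and every monomial `∏ z_{i,a}^{d_{i,a}}` appearing in `f`, the sum
of the exponents over the variables `z_{i,1},…,z_{i,k_i}` (for each `i`) is at most
`m·k + ⟨k, n−k⟩`. Monomials of the Laurent polynomial `f` are described via any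
representation `f · z^D = P` with `P` a genuine polynomial. -/
theorem slope_le_iff_monomial_degree_bound
    (src tgt : E → I) (m : I → ℚ) (n : I → ℕ) (f : KK F I)
    (hf : f ∈ LaurentIn F I n) (hfs : SymIn F I n f) :
    SlopeLE F I E src tgt m n f ↔
      ∀ (P : MvPolynomial (I × ℕ) F) (D : (I × ℕ) →₀ ℕ),
        f * algebraMap (MvPolynomial (I × ℕ) F) (KK F I) (monomial D 1)
          = algebraMap (MvPolynomial (I × ℕ) F) (KK F I) P →
        ∀ μ ∈ P.support, ∀ k : I → ℕ, (∀ i, k i ≤ n i) →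
          ((∑ i : I, ∑ a ∈ Finset.range (k i), ((μ (i, a) : ℤ) - (D (i, a) : ℤ)) : ℤ) : ℚ)
            ≤ dotQ I m k + formE I E src tgt k (fun i => n i - k i) := by
  classical
  constructor
  · intro H P D hPD μ hμ k hk
    by_cases hf0 : f = 0
    · exfalso
      have : P = 0 := by
        apply IsFractionRing.injective (MvPolynomial (I × ℕ) F) (KK F I)
        rw [← hPD, hf0, zero_mul, map_zero]
      rw [this] at hμ
      simp at hμ
    · have hlim := H k hk
      rcases hlim with h0 | hdeg
      · exact absurd ((RingHom.injective (xiScale F I k)) (h0.trans (map_zero _).symm)) hf0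
      · rw [intDegree_xiScale F I k f hf0 P D hPD] at hdeg
        rw [sum_sub_eq_sk]
        have hle : ((skAux I k μ : ℕ) : ℤ) - ((skAux I k D : ℕ) : ℤ)
            ≤ ((P.support.sup (skAux I k) : ℕ) : ℤ) - ((skAux I k D : ℕ) : ℤ) := by
          have := Finset.le_sup (f := skAux I k) hμ
          omega
        calc ((((skAux I k μ : ℕ) : ℤ) - ((skAux I k D : ℕ) : ℤ) : ℤ) : ℚ)
            ≤ ((((P.support.sup (skAux I k) : ℕ) : ℤ) - ((skAux I k D : ℕ) : ℤ) : ℤ) : ℚ) := by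
              exact_mod_cast hle
          _ ≤ _ := hdeg
  · intro H k hk
    by_cases hf0 : f = 0
    · exact Or.inl (by rw [hf0, map_zero])
    · obtain ⟨P, D, hPD⟩ := exists_rep F I n f hf
      refine Or.inr ?_
      rw [intDegree_xiScale F I k f hf0 P D hPD]
      have hmon : algebraMap (MvPolynomial (I × ℕ) F) (KK F I) (monomial D 1) ≠ 0 := by
        intro h
        have h2 : (monomial D (1 : F)) = 0 :=
          IsFractionRing.injective _ _ (h.trans (map_zero _).symm)
        simp [MvPolynomial.monomial_eq_zero] at h2
      have hP : P ≠ 0 := by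
        rintro rfl
        rw [map_zero] at hPD
        exact hf0 ((mul_eq_zero.mp hPD).resolve_right hmon)
      obtain ⟨μ0, hμ0, hsup⟩ := Finset.exists_mem_eq_sup P.support
        (Finset.nonempty_iff_ne_empty.mpr fun h => hP (MvPolynomial.support_eq_empty.mp h))
        (skAux I k)
      have hb := H P D hPD μ0 hμ0 k hk
      rw [sum_sub_eq_sk] at hb
      rw [hsup]
      exact hb

end
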